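/- Let p be an odd prime and let r, s be integers with 0 < r, s < p and r + s ≠ p. Then in the polynomial ring F_p(α)[X] one has L_{p−1}^{(rα)}(rX) · L_{p−1}^{(sα)}(sX) ≡ b_{r,s}(α) · L_{p−1}^{((r+s)α)}((r+s)X) modulo the ideal generated by X^p − (α^p − α), where L_{p−1}^{(rα)}(rX) denotes the polynomial obtained from L_{p−1}^{(α)}(X) by substituting rα for the parameter and rX for the variable. -/

import Mathlib

noncomputable def binomF {K : Type*} [Field K] (f : K) (m : ℕ) : K :=
  Polynomial.eval f (descPochhammer K m) / (m.factorial : K)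

noncomputable def Lag (p : ℕ) {K : Type*} [Field K] (a : K) : Polynomial K :=
  ∑ k ∈ Finset.range p,
    Polynomial.C (binomF (a - 1) (p - 1 - k) * (-1 : K) ^ k / (k.factorial : K)) *
      Polynomial.X ^ k

noncomputable def bF (p : ℕ) {K : Type*} [Field K] (r s : ℕ) (a : K) : K :=
  ∑ k ∈ Finset.range p,
    (-(r : K) / (s : K)) ^ k * binomF ((r : K) * a - 1) (p - 1 - k) *
      binomF ((s : K) * a - 1) k

namespace S7

open Polynomial Finset

variable (p : ℕ) [Fact p.Prime]

noncomputable def mu : (ZMod p)[X] := X ^ p - X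
noncomputable def Pi0 : (ZMod p)[X] := X ^ (p - 1) - 1
noncomputable def Dt (t : ZMod p) (m : ℕ) : (ZMod p)[X] :=
  ∏ j ∈ range m, (C t * X ^ p - C ((j + 1 : ℕ) : ZMod p))
noncomputable def Ht (t : ZMod p) : (ZMod p)[X] :=
  ∑ k ∈ range p, Dt p t (p - 1 - k) * (C t * mu p) ^ k

lemma pPos : 0 < p := (Fact.out : p.Prime).pos
lemma pOne : 1 < p := (Fact.out : p.Prime).one_lt

lemma prod_X_sub_C_univ : ∏ a ∈ (univ : Finset (ZMod p)), (X - C a) = X ^ p - X := by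
  have h1 : (X ^ p - X : (ZMod p)[X]).Monic := by
    apply monic_X_pow_sub
    simpa using (pOne p)
  have hcard : Fintype.card (ZMod p) = p := ZMod.card p
  have h2 : (X ^ p - X : (ZMod p)[X]).roots = (univ : Finset (ZMod p)).val := by
    have := FiniteField.roots_X_pow_card_sub_X (ZMod p)
    rwa [hcard] at this
  have h3 : (X ^ p - X : (ZMod p)[X]).natDegree = p := by
    have := FiniteField.X_pow_card_sub_X_natDegree_eq (ZMod p) (pOne p)
    simpa [hcard] using this
  have h4 := prod_multiset_X_sub_C_of_monic_of_roots_card_eq h1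
    (by rw [h2, h3]; simpa using hcard)
  rw [← h4, h2]
  rfl

lemma prod_univ_linear (Y : (ZMod p)[X]) :
    ∏ a ∈ (univ : Finset (ZMod p)), (Y - C a) = Y ^ p - Y := by
  have := congrArg (eval₂ (C : ZMod p →+* (ZMod p)[X]) Y) (prod_X_sub_C_univ p)
  simpa [eval₂_finset_prod] using this

lemma prod_range_cast (f : ZMod p → (ZMod p)[X]) :
    ∏ j ∈ range p, f ((j + 1 : ℕ) : ZMod p) = ∏ a ∈ (univ : Finset (ZMod p)), f a := by
  apply Finset.prod_bij (fun j _ => ((j + 1 : ℕ) : ZMod p))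
  · intro a _; exact mem_univ _
  · intro a ha b hb hab
    simp only [mem_range] at ha hb
    have hmod : (a + 1) % p = (b + 1) % p := (ZMod.natCast_eq_natCast_iff' _ _ _).mp hab
    rcases le_total a b with h | h
    · have hd : p ∣ (b + 1) - (a + 1) :=
        (Nat.modEq_iff_dvd' (by omega)).mp hmod
      have := Nat.eq_zero_of_dvd_of_lt hd (by omega)
      omega
    · have hd : p ∣ (a + 1) - (b + 1) :=
        (Nat.modEq_iff_dvd' (by omega)).mp hmod.symm
      have := Nat.eq_zero_of_dvd_of_lt hd (by omega)
      omega
  · intro a _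
    refine ⟨(a - 1).val, mem_range.mpr (ZMod.val_lt _), ?_⟩
    have : (((a - 1).val : ℕ) : ZMod p) = a - 1 := ZMod.natCast_rightInverse (a - 1)
    push_cast
    rw [this]; ring
  · intro a _; rfl

lemma Dt_p (t : ZMod p) : Dt p t p = (C t * mu p) ^ p := by
  have h1 : Dt p t p = (C t * X ^ p) ^ p - C t * X ^ p := by
    rw [Dt, prod_range_cast p (fun a => C t * X ^ p - C a)]
    exact prod_univ_linear p _
  rw [h1, mu, mul_pow, mul_pow, ← C_pow, ZMod.pow_card, sub_pow_char]
  ring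

lemma deriv_mu : derivative (mu p) = -1 := by
  rw [mu]
  simp [derivative_X_pow, CharP.cast_eq_zero]

lemma deriv_Dt (t : ZMod p) (m : ℕ) : derivative (Dt p t m) = 0 := by
  rw [Dt]
  induction m with
  | zero => simp
  | succ n ih =>
    rw [prod_range_succ, derivative_mul, ih, zero_mul, zero_add]
    have : derivative (C t * X ^ p - C ((n + 1 : ℕ) : ZMod p)) = 0 := by
      simp [derivative_X_pow, CharP.cast_eq_zero]
    rw [this, mul_zero]

lemma Dt_succ (t : ZMod p) (m : ℕ) :
    Dt p t (m + 1) = Dt p t m * (C t * X ^ p - C ((m + 1 : ℕ) : ZMod p)) := by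
  rw [Dt, Dt, prod_range_succ]

lemma X_mul_Pi0 : (X : (ZMod p)[X]) * Pi0 p = mu p := by
  rw [Pi0, mu, mul_sub, mul_one, ← pow_succ']
  have : p - 1 + 1 = p := by have := pPos p; omega
  rw [this]

lemma ode_H (t : ZMod p) : Pi0 p * derivative (Ht p t) = C t * Ht p t := by
  have hX : (X : (ZMod p)[X]) ≠ 0 := X_ne_zero
  apply mul_left_cancel₀ hX
  rw [← mul_assoc, X_mul_Pi0]
  have hder : mu p * derivative (Ht p t)
      = ∑ k ∈ range p, -(C ((k : ℕ) : ZMod p) * (Dt p t (p - 1 - k) * (C t * mu p) ^ k)) := by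
    rw [Ht, derivative_sum, mul_sum]
    apply Finset.sum_congr rfl
    intro k _
    rw [derivative_mul, deriv_Dt, zero_mul, zero_add, derivative_pow, derivative_mul,
      deriv_mu, derivative_C, zero_mul, zero_add]
    cases k with
    | zero => simp
    | succ n =>
      have hn : n + 1 - 1 = n := rfl
      rw [hn]
      push_cast
      ring
  have hrhs : X * (C t * Ht p t)
      = ∑ k ∈ range p, (C t * X) * (Dt p t (p - 1 - k) * (C t * mu p) ^ k) := by
    rw [Ht, mul_sum, mul_sum]
    apply Finset.sum_congr rfl
    intro k _
    ring
  have htel : ∑ k ∈ range p,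
      ((C ((k : ℕ) : ZMod p) + C t * X) * (Dt p t (p - 1 - k) * (C t * mu p) ^ k)) = 0 := by
    have hterm : ∀ k ∈ range p,
        (C ((k : ℕ) : ZMod p) + C t * X) * (Dt p t (p - 1 - k) * (C t * mu p) ^ k)
        = (fun j => Dt p t (p - j) * (C t * mu p) ^ j) k
          - (fun j => Dt p t (p - j) * (C t * mu p) ^ j) (k + 1) := by
      intro k hk
      simp only [mem_range] at hk
      have h1 : p - k = (p - 1 - k) + 1 := by have := pPos p; omega
      have h2 : p - (k + 1) = p - 1 - k := by omega
      simp only []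
      rw [h1, h2, Dt_succ]
      have hc : (C ((k : ℕ) : ZMod p) : (ZMod p)[X]) = -C (((p - 1 - k) + 1 : ℕ) : ZMod p) := by
        rw [← C_neg]
        congr 1
        have hs : (((p - 1 - k) + 1) + k) = p := by have := pPos p; omega
        have hz : ((((p - 1 - k) + 1 : ℕ)) : ZMod p) + ((k : ℕ) : ZMod p) = 0 := by
          rw [← Nat.cast_add, hs, ZMod.natCast_self]
        linear_combination hz
      rw [hc]
      have hXr : (C t * X : (ZMod p)[X]) = C t * X ^ p - C t * mu p := by
        rw [mu]; ring
      rw [hXr]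
      ring
    rw [Finset.sum_congr rfl hterm, Finset.sum_range_sub']
    simp only [Nat.sub_zero, Nat.sub_self, pow_zero, mul_one, Dt_p]
    rw [Dt]
    simp
  rw [hder, hrhs, ← sub_eq_zero, ← Finset.sum_sub_distrib]
  have hfin : ∀ k ∈ range p,
      (-(C ((k : ℕ) : ZMod p) * (Dt p t (p - 1 - k) * (C t * mu p) ^ k))
        - C t * X * (Dt p t (p - 1 - k) * (C t * mu p) ^ k))
      = -((C ((k : ℕ) : ZMod p) + C t * X) * (Dt p t (p - 1 - k) * (C t * mu p) ^ k)) := by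
    intro k _
    ring
  rw [Finset.sum_congr rfl hfin, Finset.sum_neg_distrib, htel, neg_zero]

noncomputable def Vt (t : ZMod p) : (ZMod p)[X] :=
  ∏ a ∈ (univ : Finset (ZMod p)).erase 0, (X - C a) ^ (p - (t * a).val)

lemma derivative_finset_prod {ι : Type*} [DecidableEq ι] (s : Finset ι) (f : ι → (ZMod p)[X]) :
    derivative (∏ i ∈ s, f i) = ∑ i ∈ s, (∏ j ∈ s.erase i, f j) * derivative (f i) := by
  rw [Finset.prod_eq_multiset_prod, derivative_prod, Finset.sum_eq_multiset_sum]
  congr 1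

lemma Pi0_prod : Pi0 p = ∏ a ∈ (univ : Finset (ZMod p)).erase 0, (X - C a) := by
  have hX : (X : (ZMod p)[X]) ≠ 0 := X_ne_zero
  apply mul_left_cancel₀ hX
  rw [X_mul_Pi0, mu, ← prod_X_sub_C_univ p, ← Finset.mul_prod_erase _ _ (mem_univ (0 : ZMod p))]
  simp

lemma castPsub1 : ((p - 1 : ℕ) : ZMod p) = -1 := by
  have hp := pPos p
  have h : ((p - 1 : ℕ) : ZMod p) + ((1 : ℕ) : ZMod p) = ((p : ℕ) : ZMod p) := by
    rw [← Nat.cast_add]; congr 1; omega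
  rw [ZMod.natCast_self, Nat.cast_one] at h
  linear_combination h

lemma deriv_Pi0 : derivative (Pi0 p) = -X ^ (p - 2) := by
  rw [Pi0]
  rw [derivative_sub, derivative_one, derivative_X_pow, sub_zero, castPsub1]
  have h2 : p - 1 - 1 = p - 2 := by omega
  rw [h2]
  simp

lemma rho_lemma :
    ∑ a ∈ (univ : Finset (ZMod p)).erase 0,
      C a * ∏ b ∈ ((univ : Finset (ZMod p)).erase 0).erase a, (X - C b) = -1 := by
  set E := (univ : Finset (ZMod p)).erase 0 with hE
  have hQsum : ∑ a ∈ E, ∏ b ∈ E.erase a, (X - C b) = derivative (Pi0 p) := by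
    rw [Pi0_prod, derivative_finset_prod]
    apply Finset.sum_congr rfl
    intro a _
    simp
    rfl
  have hcard : E.card = p - 1 := by
    rw [hE, Finset.card_erase_of_mem (mem_univ _), Finset.card_univ, ZMod.card]
  have key : ∀ a ∈ E, C a * ∏ b ∈ E.erase a, (X - C b)
      = X * ∏ b ∈ E.erase a, (X - C b) - Pi0 p := by
    intro a ha
    rw [Pi0_prod, ← Finset.mul_prod_erase _ _ ha]
    ring
  rw [Finset.sum_congr rfl key, Finset.sum_sub_distrib, ← Finset.mul_sum, hQsum, deriv_Pi0,
    Finset.sum_const, hcard]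
  have h3 : (X : (ZMod p)[X]) * -X ^ (p - 2) = -X ^ (p - 1) := by
    have : p - 2 + 1 = p - 1 := by have := pOne p; omega
    rw [← this]
    ring
  rw [h3]
  have h4 : ((p - 1) : ℕ) • (Pi0 p) = -Pi0 p := by
    rw [nsmul_eq_mul]
    have h1 : ((p - 1 : ℕ) : (ZMod p)[X]) = -1 := by
      rw [← C_eq_natCast, castPsub1]
      simp
    rw [h1]; ring
  rw [h4, Pi0]
  ring


lemma ode_V (t : ZMod p) (ht : t ≠ 0) : Pi0 p * derivative (Vt p t) = C t * Vt p t := by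
  set E := (univ : Finset (ZMod p)).erase 0 with hE
  have hmem : ∀ a ∈ E, a ≠ 0 := by
    intro a ha
    exact Finset.ne_of_mem_erase ha
  have hexp : ∀ a ∈ E, 1 ≤ p - (t * a).val ∧ ((p - (t*a).val : ℕ) : ZMod p) = -(t * a) := by
    intro a ha
    have hta : t * a ≠ 0 := mul_ne_zero ht (hmem a ha)
    have h1 : (t * a).val < p := ZMod.val_lt _
    have h2 : (t * a).val ≠ 0 := fun h => hta ((ZMod.val_eq_zero _).mp h)
    constructor
    · omega
    · rw [Nat.cast_sub (le_of_lt h1), ZMod.natCast_self,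
        (ZMod.natCast_rightInverse (t * a) : (((t*a).val : ℕ) : ZMod p) = t * a)]
      ring
  rw [Vt, derivative_finset_prod]
  rw [Finset.mul_sum]
  have key : ∀ a ∈ E,
      Pi0 p * ((∏ b ∈ E.erase a, (X - C b) ^ (p - (t * b).val)) *
        derivative ((X - C a) ^ (p - (t * a).val)))
      = (C (-(t*a)) * ∏ b ∈ E.erase a, (X - C b)) * Vt p t := by
    intro a ha
    obtain ⟨he1, he2⟩ := hexp a ha
    rw [derivative_pow]
    have hd : derivative (X - C a) = 1 := by simp
    rw [hd, mul_one]
    have hPi : Pi0 p = (X - C a) * ∏ b ∈ E.erase a, (X - C b) := by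
      rw [Pi0_prod, ← Finset.mul_prod_erase _ _ ha]
    have hVt : Vt p t = (X - C a) ^ (p - (t * a).val) *
        ∏ b ∈ E.erase a, (X - C b) ^ (p - (t * b).val) := by
      rw [Vt, ← Finset.mul_prod_erase _ _ ha]
    have hcast : C (((p - (t * a).val : ℕ) : ZMod p)) = C (-(t*a)) := by
      rw [he2]
    rw [hcast, hPi, hVt]
    have hpow : (X - C a) * (X - C a) ^ (p - (t * a).val - 1) = (X - C a) ^ (p - (t * a).val) := by
      rw [← pow_succ']
      congr 1
      omega
    calc (X - C a) * (∏ b ∈ E.erase a, (X - C b)) *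
          ((∏ b ∈ E.erase a, (X - C b) ^ (p - (t * b).val)) *
            (C (-(t * a)) * (X - C a) ^ (p - (t * a).val - 1)))
        = (C (-(t*a)) * ∏ b ∈ E.erase a, (X - C b)) *
          (((X - C a) * (X - C a) ^ (p - (t * a).val - 1)) *
            ∏ b ∈ E.erase a, (X - C b) ^ (p - (t * b).val)) := by ring
      _ = _ := by rw [hpow]
  rw [Finset.sum_congr rfl key, ← Finset.sum_mul]
  congr 1
  have : ∀ a ∈ E, C (-(t*a)) * ∏ b ∈ E.erase a, (X - C b)
      = C (-t) * (C a * ∏ b ∈ E.erase a, (X - C b)) := by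
    intro a _
    rw [C_neg, C_neg, C_mul]
    ring
  rw [Finset.sum_congr rfl this, ← Finset.mul_sum, rho_lemma]
  rw [C_neg]
  ring

noncomputable def Wt (t : ZMod p) : (ZMod p)[X] := Ht p t * Vt p (-t)

noncomputable def Dcar (t1 t2 : ZMod p) : (ZMod p)[X] :=
  ∏ a ∈ (univ : Finset (ZMod p)).erase 0,
    (X - C a) ^ (p - ((t1 * a).val + (t2 * a).val - ((t1 + t2) * a).val))

noncomputable def htp (t : ZMod p) : Polynomial ((ZMod p)[X]) :=
  ∑ k ∈ range p, C (Dt p t (p - 1 - k) * (C t) ^ k) * X ^ k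

noncomputable def Bt (t1 t2 : ZMod p) : (ZMod p)[X] := (htp p t1 * htp p t2).coeff (p - 1)

lemma natCast_ne_zero_of_lt {m : ℕ} (h0 : m ≠ 0) (h : m < p) : ((m : ℕ) : ZMod p) ≠ 0 := by
  intro hc
  have := ZMod.val_cast_of_lt h
  rw [hc, ZMod.val_zero] at this
  omega

lemma Pi0_ne_zero : Pi0 p ≠ 0 := by
  intro h
  have : eval 0 (Pi0 p) = 0 := by rw [h]; simp
  rw [Pi0] at this
  have hp1 : p - 1 ≠ 0 := by have := pOne p; omega
  rw [eval_sub, eval_pow, eval_X, eval_one, zero_pow hp1] at this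
  simp at this

lemma Vt_ne_zero (t : ZMod p) : Vt p t ≠ 0 := by
  rw [Vt]
  apply Finset.prod_ne_zero_iff.mpr
  intro a _
  exact pow_ne_zero _ (X_sub_C_ne_zero a)

lemma Ht_ne_zero (t : ZMod p) : Ht p t ≠ 0 := by
  intro h
  have he : eval 0 (Ht p t) = 0 := by rw [h]; simp
  rw [Ht, eval_finset_sum] at he
  have hmu : eval 0 (mu p) = 0 := by
    rw [mu, eval_sub, eval_pow, eval_X, zero_pow (pPos p).ne', sub_zero]
  have hzero : ∀ k ∈ range p, k ≠ 0 → eval 0 (Dt p t (p - 1 - k) * (C t * mu p) ^ k) = 0 := by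
    intro k _ hk
    rw [eval_mul, eval_pow, eval_mul, hmu, mul_zero, zero_pow hk, mul_zero]
  rw [Finset.sum_eq_single_of_mem 0 (mem_range.mpr (pPos p)) hzero] at he
  rw [pow_zero, mul_one, Nat.sub_zero, Dt, eval_prod] at he
  obtain ⟨j, hj, hjz⟩ := Finset.prod_eq_zero_iff.mp he
  rw [eval_sub, eval_mul, eval_C, eval_pow, eval_X, eval_C, zero_pow (pPos p).ne', mul_zero,
    zero_sub, neg_eq_zero] at hjz
  have hjlt : j < p - 1 := mem_range.mp hj
  exact natCast_ne_zero_of_lt p (by omega) (by omega) hjz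

lemma deriv_Wt (t : ZMod p) (ht : t ≠ 0) : derivative (Wt p t) = 0 := by
  have hne : Pi0 p ≠ 0 := Pi0_ne_zero p
  have hH := ode_H p t
  have hV := ode_V p (-t) (neg_ne_zero.mpr ht)
  rw [C_neg] at hV
  have key : Pi0 p * derivative (Wt p t) = 0 := by
    rw [Wt, derivative_mul]
    linear_combination (Vt p (-t)) * hH + (Ht p t) * hV
  rcases mul_eq_zero.mp key with h | h
  · exact absurd h hne
  · exact h

lemma Wt_ne_zero (t : ZMod p) : Wt p t ≠ 0 :=
  mul_ne_zero (Ht_ne_zero p t) (Vt_ne_zero p (-t))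

lemma carry_arith (x y : ZMod p) (hx : x ≠ 0) (hy : y ≠ 0) (hxy : x + y ≠ 0) :
    ((p - x.val) + (p - y.val) = (p - (x+y).val) + (p - (x.val + y.val - (x+y).val))
      ∧ (x.val + y.val - (x+y).val = 0 ∨ x.val + y.val - (x+y).val = p)) := by
  have h1 : x.val < p := ZMod.val_lt x
  have h2 : y.val < p := ZMod.val_lt y
  have h3 : (x+y).val < p := ZMod.val_lt (x+y)
  have h1' : x.val ≠ 0 := fun h => hx ((ZMod.val_eq_zero _).mp h)
  have h2' : y.val ≠ 0 := fun h => hy ((ZMod.val_eq_zero _).mp h)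
  have h3' : (x+y).val ≠ 0 := fun h => hxy ((ZMod.val_eq_zero _).mp h)
  have hadd : (x+y).val = (x.val + y.val) % p := ZMod.val_add x y
  rcases Nat.lt_or_ge (x.val + y.val) p with h | h
  · rw [Nat.mod_eq_of_lt h] at hadd
    omega
  · have : (x.val + y.val) % p = x.val + y.val - p := by
      rw [Nat.mod_eq_sub_mod h, Nat.mod_eq_of_lt (by omega)]
    rw [this] at hadd
    omega

lemma carry_mul (t1 t2 : ZMod p) (h1 : t1 ≠ 0) (h2 : t2 ≠ 0) (h12 : t1 + t2 ≠ 0) :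
    Vt p t1 * Vt p t2 = Vt p (t1 + t2) * Dcar p t1 t2 := by
  rw [Vt, Vt, Vt, Dcar, ← Finset.prod_mul_distrib, ← Finset.prod_mul_distrib]
  apply Finset.prod_congr rfl
  intro a ha
  have ha0 : a ≠ 0 := Finset.ne_of_mem_erase ha
  rw [← pow_add, ← pow_add]
  congr 1
  have := carry_arith p (t1 * a) (t2 * a) (mul_ne_zero h1 ha0) (mul_ne_zero h2 ha0)
    (by rw [← add_mul]; exact mul_ne_zero h12 ha0)
  rw [← add_mul] at this
  exact this.1

lemma deriv_Dcar (t1 t2 : ZMod p) (h1 : t1 ≠ 0) (h2 : t2 ≠ 0) (h12 : t1 + t2 ≠ 0) :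
    derivative (Dcar p t1 t2) = 0 := by
  rw [Dcar, derivative_finset_prod]
  apply Finset.sum_eq_zero
  intro a ha
  have ha0 : a ≠ 0 := Finset.ne_of_mem_erase ha
  have := (carry_arith p (t1 * a) (t2 * a) (mul_ne_zero h1 ha0) (mul_ne_zero h2 ha0)
    (by rw [← add_mul]; exact mul_ne_zero h12 ha0)).2
  rw [← add_mul] at this
  set e := p - ((t1*a).val + (t2*a).val - ((t1+t2)*a).val) with he
  have hcast : ((e : ℕ) : ZMod p) = 0 := by
    rcases this with h | h
    · rw [he, h, Nat.sub_zero, ZMod.natCast_self]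
    · rw [he, h, Nat.sub_self, Nat.cast_zero]
  rw [derivative_pow, hcast]
  simp

lemma Dcar_ne_zero (t1 t2 : ZMod p) : Dcar p t1 t2 ≠ 0 := by
  rw [Dcar]
  apply Finset.prod_ne_zero_iff.mpr
  intro a _
  exact pow_ne_zero _ (X_sub_C_ne_zero a)

lemma indep : ∀ (n : ℕ), n ≤ p → ∀ (w : ℕ → (ZMod p)[X]), (∀ j, derivative (w j) = 0) →
    (∑ j ∈ range n, w j * (mu p) ^ j = 0) → ∀ j, j < n → w j = 0 := by
  intro n
  induction n with
  | zero => intro _ w _ _ j hj; omega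
  | succ n ih =>
    intro hn w hw hsum
    have e1 : ∀ j : ℕ, derivative (w j * (mu p) ^ j)
        = -(C (((j : ℕ)) : ZMod p) * w j * (mu p) ^ (j - 1)) := by
      intro j
      rw [derivative_mul, hw j, zero_mul, zero_add, derivative_pow, deriv_mu]
      ring
    have e2 : ∑ j ∈ range (n + 1), -(C (((j : ℕ)) : ZMod p) * w j * (mu p) ^ (j - 1)) = 0 := by
      rw [← Finset.sum_congr rfl (fun j _ => e1 j), ← derivative_sum, hsum, derivative_zero]
    rw [Finset.sum_range_succ'] at e2
    simp only [Nat.cast_zero, map_zero, zero_mul, neg_zero, add_zero] at e2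
    have e3 : ∑ i ∈ range n, (C (((i + 1 : ℕ)) : ZMod p) * w (i + 1)) * (mu p) ^ i = 0 := by
      have : ∀ i ∈ range n, -(C (((i + 1 : ℕ)) : ZMod p) * w (i + 1) * (mu p) ^ (i + 1 - 1))
          = -((C (((i + 1 : ℕ)) : ZMod p) * w (i + 1)) * (mu p) ^ i) := by
        intro i _
        norm_num
      rw [Finset.sum_congr rfl this, Finset.sum_neg_distrib, neg_eq_zero] at e2
      exact e2
    have hw' : ∀ j, derivative (C (((j + 1 : ℕ)) : ZMod p) * w (j + 1)) = 0 := by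
      intro j
      rw [derivative_mul, hw (j + 1), mul_zero, add_zero, derivative_C, zero_mul]
    have hz : ∀ i, i < n → C (((i + 1 : ℕ)) : ZMod p) * w (i + 1) = 0 :=
      ih (by omega) _ hw' e3
    have hw1 : ∀ i, i < n → w (i + 1) = 0 := by
      intro i hi
      have hne : (C (((i + 1 : ℕ)) : ZMod p) : (ZMod p)[X]) ≠ 0 := by
        rw [Ne, C_eq_zero]
        exact natCast_ne_zero_of_lt p (by omega) (by omega)
      rcases mul_eq_zero.mp (hz i hi) with h | h
      · exact absurd h hne
      · exact h
    intro j hj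
    rcases Nat.eq_zero_or_pos j with rfl | hj0
    · rw [Finset.sum_range_succ'] at hsum
      have : ∀ i ∈ range n, w (i + 1) * (mu p) ^ (i + 1) = 0 := by
        intro i hi
        rw [hw1 i (mem_range.mp hi), zero_mul]
      rw [Finset.sum_congr rfl this, Finset.sum_const_zero, zero_add, pow_zero, mul_one] at hsum
      exact hsum
    · have : j - 1 < n := by omega
      have := hw1 (j - 1) this
      have hj1 : j - 1 + 1 = j := by omega
      rwa [hj1] at this

lemma htp_coeff (t : ZMod p) (k : ℕ) :
    (htp p t).coeff k = if k ∈ range p then Dt p t (p - 1 - k) * (C t) ^ k else 0 := by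
  rw [htp, finset_sum_coeff]
  have : ∀ i ∈ range p, (C (Dt p t (p - 1 - i) * (C t) ^ i) * X ^ i).coeff k
      = if i = k then Dt p t (p - 1 - i) * (C t) ^ i else 0 := by
    intro i _
    rw [C_mul_X_pow_eq_monomial, coeff_monomial]
  rw [Finset.sum_congr rfl this, Finset.sum_ite_eq']

lemma htp_natDegree (t : ZMod p) : (htp p t).natDegree ≤ p - 1 := by
  rw [htp]
  apply natDegree_sum_le_of_forall_le
  intro k hk
  apply le_trans (natDegree_C_mul_le _ _)
  rw [natDegree_X_pow]
  exact Nat.le_sub_one_of_lt (mem_range.mp hk)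

lemma Ht_eval (t : ZMod p) : Ht p t = eval (mu p) (htp p t) := by
  rw [Ht, htp, eval_finset_sum]
  apply Finset.sum_congr rfl
  intro k _
  rw [eval_mul, eval_C, eval_pow, eval_X, mul_pow]
  ring

lemma deriv_htp_coeff (t : ZMod p) (d : ℕ) : derivative ((htp p t).coeff d) = 0 := by
  rw [htp_coeff]
  split
  · rw [derivative_mul, deriv_Dt, zero_mul, zero_add, derivative_pow, derivative_C]
    ring
  · exact derivative_zero

lemma deriv_prod_coeff (t1 t2 : ZMod p) (d : ℕ) :
    derivative ((htp p t1 * htp p t2).coeff d) = 0 := by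
  rw [coeff_mul, derivative_sum]
  apply Finset.sum_eq_zero
  intro x _
  rw [derivative_mul, deriv_htp_coeff, deriv_htp_coeff, zero_mul, mul_zero, add_zero]

lemma deriv_mu_pow_p : derivative ((mu p) ^ p) = 0 := by
  rw [derivative_pow, deriv_mu]
  have : ((p : ℕ) : (ZMod p)[X]) = 0 := by
    rw [← C_eq_natCast, ZMod.natCast_self, map_zero]
  rw [C_eq_natCast, this]
  ring

lemma prod_eval (t1 t2 : ZMod p) : eval (mu p) (htp p t1 * htp p t2)
    = ∑ j ∈ range p, ((htp p t1 * htp p t2).coeff j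
        + (mu p) ^ p * (htp p t1 * htp p t2).coeff (p + j)) * (mu p) ^ j := by
  set G := htp p t1 * htp p t2 with hG
  have hdeg : G.natDegree < p + p := by
    have hm := natDegree_mul_le (p := htp p t1) (q := htp p t2)
    rw [← hG] at hm
    have ha := htp_natDegree p t1
    have hb := htp_natDegree p t2
    have hc := pPos p
    omega
  rw [eval_eq_sum_range' hdeg]
  have hsplit : ∑ i ∈ range (p + p), G.coeff i * mu p ^ i
      = ∑ i ∈ range p, G.coeff i * mu p ^ i + ∑ i ∈ range p, G.coeff (p + i) * mu p ^ (p + i) := by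
    rw [Finset.range_eq_Ico, ← Finset.sum_Ico_consecutive _ (Nat.zero_le p) (Nat.le_add_right p p)]
    congr 1
    · rw [Finset.range_eq_Ico]
    rw [Finset.sum_Ico_eq_sum_range]
    have hpp : p + p - p = p := by omega
    rw [hpp]
  rw [hsplit, ← Finset.sum_add_distrib]
  apply Finset.sum_congr rfl
  intro j _
  rw [pow_add]
  ring

lemma main_id (t1 t2 : ZMod p) (h1 : t1 ≠ 0) (h2 : t2 ≠ 0) (h12 : t1 + t2 ≠ 0) :
    Ht p t1 * Ht p t2 = Bt p t1 t2 * Ht p (t1 + t2) := by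
  have hV := carry_mul p (-t1) (-t2) (neg_ne_zero.mpr h1) (neg_ne_zero.mpr h2)
    (by rw [← neg_add]; exact neg_ne_zero.mpr h12)
  rw [← neg_add] at hV
  have hid : (Wt p t1 * Wt p t2) * Ht p (t1 + t2)
      = (Dcar p (-t1) (-t2) * Wt p (t1 + t2)) * (Ht p t1 * Ht p t2) := by
    rw [Wt, Wt, Wt]
    linear_combination (Ht p t1 * Ht p t2 * Ht p (t1 + t2)) * hV
  set F := Wt p t1 * Wt p t2 with hF
  set E := Dcar p (-t1) (-t2) * Wt p (t1 + t2) with hE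
  set G := htp p t1 * htp p t2 with hG
  have hL : F * Ht p (t1 + t2) = ∑ j ∈ range p,
      (F * (Dt p (t1 + t2) (p - 1 - j) * (C (t1 + t2)) ^ j)) * (mu p) ^ j := by
    rw [Ht, Finset.mul_sum]
    apply Finset.sum_congr rfl
    intro j _
    rw [mul_pow]
    ring
  have hR : E * (Ht p t1 * Ht p t2) = ∑ j ∈ range p,
      (E * (G.coeff j + (mu p) ^ p * G.coeff (p + j))) * (mu p) ^ j := by
    rw [Ht_eval p t1, Ht_eval p t2, ← eval_mul, ← hG, prod_eval, Finset.mul_sum]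
    apply Finset.sum_congr rfl
    intro j _
    ring
  set w : ℕ → (ZMod p)[X] := fun j =>
    (F * (Dt p (t1 + t2) (p - 1 - j) * (C (t1 + t2)) ^ j))
      - (E * (G.coeff j + (mu p) ^ p * G.coeff (p + j))) with hw
  have hsum : ∑ j ∈ range p, w j * (mu p) ^ j = 0 := by
    have h' := hid
    rw [hL, hR] at h'
    rw [← sub_eq_zero] at h'
    rw [← Finset.sum_sub_distrib] at h'
    rw [← h']
    apply Finset.sum_congr rfl
    intro j _
    rw [hw]
    ring
  have hdF : derivative F = 0 := by
    rw [hF, derivative_mul, deriv_Wt p t1 h1, deriv_Wt p t2 h2, zero_mul, mul_zero, add_zero]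
  have hdE : derivative E = 0 := by
    rw [hE, derivative_mul, deriv_Dcar p (-t1) (-t2) (neg_ne_zero.mpr h1) (neg_ne_zero.mpr h2)
      (by rw [← neg_add]; exact neg_ne_zero.mpr h12), deriv_Wt p (t1 + t2) h12,
      zero_mul, mul_zero, add_zero]
  have hwder : ∀ j, derivative (w j) = 0 := by
    intro j
    rw [hw]
    simp only []
    rw [derivative_sub, derivative_mul, hdF, zero_mul, derivative_mul, deriv_Dt, zero_mul,
      derivative_pow, derivative_C, derivative_mul, hdE, zero_mul, derivative_add,
      deriv_prod_coeff, derivative_mul, deriv_mu_pow_p, zero_mul, deriv_prod_coeff]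
    ring
  have hext := indep p p (le_refl p) w hwder hsum (p - 1) (by have := pPos p; omega)
  rw [hw] at hext
  simp only [] at hext
  have e0 : p - 1 - (p - 1) = 0 := by omega
  have e1 : Dt p (t1 + t2) (p - 1 - (p - 1)) = 1 := by rw [e0, Dt, Finset.range_zero, Finset.prod_empty]
  have e2 : (C (t1 + t2) : (ZMod p)[X]) ^ (p - 1) = 1 := by
    rw [← C_pow, ZMod.pow_card_sub_one_eq_one h12, C_1]
  have e3 : G.coeff (p + (p - 1)) = 0 := by
    apply coeff_eq_zero_of_natDegree_lt
    have hm := natDegree_mul_le (p := htp p t1) (q := htp p t2)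
    have ha := htp_natDegree p t1
    have hb := htp_natDegree p t2
    have hc := pOne p
    rw [hG]
    omega
  rw [e1, e2, e3] at hext
  have hext2 : F = E * G.coeff (p - 1) := by linear_combination hext
  have hEne : E ≠ 0 := mul_ne_zero (Dcar_ne_zero p _ _) (Wt_ne_zero p _)
  have : E * (G.coeff (p - 1) * Ht p (t1 + t2)) = E * (Ht p t1 * Ht p t2) := by
    rw [← hid, hext2]
    ring
  have hfin := mul_left_cancel₀ hEne this
  rw [Bt, ← hG, ← hfin]

noncomputable def Da (t : ZMod p) (m : ℕ) : (ZMod p)[X] :=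
  ∏ j ∈ range m, (C t * X - C ((j + 1 : ℕ) : ZMod p))

noncomputable def Fh (t : ZMod p) : Polynomial ((ZMod p)[X]) :=
  -∑ k ∈ range p, C (Da p t (p - 1 - k) * (C t) ^ k) * X ^ k

noncomputable def b0 (t1 t2 : ZMod p) : (ZMod p)[X] :=
  -∑ k ∈ range p, (C (t1 * t2⁻¹)) ^ k * Da p t1 (p - 1 - k) * Da p t2 k

noncomputable def T0 (t1 t2 : ZMod p) : Polynomial ((ZMod p)[X]) :=
  Fh p t1 * Fh p t2 - C (b0 p t1 t2) * Fh p (t1 + t2)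

noncomputable def P0 : Polynomial ((ZMod p)[X]) := X ^ p - C (X ^ p - X)

noncomputable def psi : (ZMod p)[X] →+* (ZMod p)[X] := (expand (ZMod p) p).toRingHom

noncomputable def Psi : Polynomial ((ZMod p)[X]) →+* (ZMod p)[X] :=
  eval₂RingHom (psi p) (mu p)

lemma psi_C (c : ZMod p) : psi p (C c) = C c := by
  simp [psi]

lemma psi_X : psi p (X : (ZMod p)[X]) = X ^ p := by
  simp [psi]

lemma deriv_psi (f : (ZMod p)[X]) : derivative (psi p f) = 0 := by
  have h : psi p f = expand (ZMod p) p f := rfl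
  rw [h, Polynomial.derivative_expand]
  have hz : ((p : ℕ) : (ZMod p)[X]) = 0 := by
    rw [← C_eq_natCast, ZMod.natCast_self, map_zero]
  rw [hz]
  ring

lemma psi_Da (t : ZMod p) (m : ℕ) : psi p (Da p t m) = Dt p t m := by
  rw [Da, Dt, map_prod]
  apply Finset.prod_congr rfl
  intro j _
  rw [map_sub, map_mul, psi_C, psi_C, psi_X]

lemma Psi_Fh (t : ZMod p) : Psi p (Fh p t) = -(Ht p t) := by
  rw [Fh, map_neg, neg_inj, Psi]
  rw [coe_eval₂RingHom, eval₂_finset_sum]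
  rw [Ht]
  apply Finset.sum_congr rfl
  intro k _
  rw [eval₂_mul, eval₂_C, eval₂_X_pow, map_mul, psi_Da, map_pow, psi_C, mul_pow]
  ring

lemma Bt_eq (t1 t2 : ZMod p) (h2 : t2 ≠ 0) :
    Bt p t1 t2 = ∑ k ∈ range p, (C (t1 * t2⁻¹)) ^ k * Dt p t1 (p - 1 - k) * Dt p t2 k := by
  rw [Bt, coeff_mul]
  rw [Finset.Nat.sum_antidiagonal_eq_sum_range_succ_mk]
  have hp1 : (p - 1).succ = p := by have := pPos p; omega
  rw [hp1]
  apply Finset.sum_congr rfl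
  intro k hk
  have hk' : k < p := mem_range.mp hk
  rw [htp_coeff, htp_coeff]
  rw [if_pos (mem_range.mpr hk'), if_pos (mem_range.mpr (by omega : p - 1 - k < p))]
  have e1 : p - 1 - (p - 1 - k) = k := by omega
  rw [e1]
  have e2 : (C t1 : (ZMod p)[X]) ^ k * (C t2) ^ (p - 1 - k) = (C (t1 * t2⁻¹)) ^ k := by
    rw [← C_pow, ← C_pow, ← C_mul, ← C_pow]
    congr 1
    have ht2k : t2 ^ k ≠ 0 := pow_ne_zero _ h2
    apply mul_right_cancel₀ ht2k
    have lhs : t1 ^ k * t2 ^ (p - 1 - k) * t2 ^ k = t1 ^ k := by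
      rw [mul_assoc, ← pow_add]
      have hh : p - 1 - k + k = p - 1 := by omega
      rw [hh, ZMod.pow_card_sub_one_eq_one h2, mul_one]
    have rhs : (t1 * t2⁻¹) ^ k * t2 ^ k = t1 ^ k := by
      rw [← mul_pow, mul_assoc, inv_mul_cancel₀ h2, mul_one]
    rw [lhs, rhs]
  rw [← e2]
  ring

lemma Psi_b0 (t1 t2 : ZMod p) : psi p (b0 p t1 t2)
    = -∑ k ∈ range p, (C (t1 * t2⁻¹)) ^ k * Dt p t1 (p - 1 - k) * Dt p t2 k := by
  rw [b0, map_neg, neg_inj, map_sum]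
  apply Finset.sum_congr rfl
  intro k _
  rw [map_mul, map_mul, map_pow, psi_C, psi_Da, psi_Da]

lemma Psi_T0 (t1 t2 : ZMod p) (h1 : t1 ≠ 0) (h2 : t2 ≠ 0) (h12 : t1 + t2 ≠ 0) :
    Psi p (T0 p t1 t2) = 0 := by
  rw [T0, map_sub, map_mul, map_mul, Psi_Fh, Psi_Fh, Psi_Fh]
  have hC : Psi p (C (b0 p t1 t2)) = psi p (b0 p t1 t2) := by
    rw [Psi, coe_eval₂RingHom, eval₂_C]
  rw [hC, Psi_b0, ← Bt_eq p t1 t2 h2]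
  have := main_id p t1 t2 h1 h2 h12
  linear_combination this

lemma Psi_P0 : Psi p (P0 p) = 0 := by
  rw [P0, map_sub, map_pow, Psi, coe_eval₂RingHom, eval₂_C, eval₂_X]
  have h1 : (mu p) ^ p = (X ^ p : (ZMod p)[X]) ^ p - X ^ p := by
    rw [mu, sub_pow_char]
  have h2 : psi p ((X : (ZMod p)[X]) ^ p - X) = (X ^ p : (ZMod p)[X]) ^ p - X ^ p := by
    rw [map_sub, map_pow, psi_X]
  rw [h1, h2, sub_self]

lemma P0_monic : (P0 p).Monic := by
  rw [P0]
  exact monic_X_pow_sub_C _ (pPos p).ne'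

lemma dvd_T0 (t1 t2 : ZMod p) (h1 : t1 ≠ 0) (h2 : t2 ≠ 0) (h12 : t1 + t2 ≠ 0) :
    P0 p ∣ T0 p t1 t2 := by
  have hmon := P0_monic p
  have hdiv := modByMonic_add_div (T0 p t1 t2) (P0 p)
  suffices h : T0 p t1 t2 %ₘ P0 p = 0 by
    refine ⟨T0 p t1 t2 /ₘ P0 p, ?_⟩
    conv_lhs => rw [← hdiv]
    rw [h, zero_add]
  set rem := T0 p t1 t2 %ₘ P0 p with hrem
  by_cases hz : rem = 0
  · exact hz
  have hdeg : rem.natDegree < p := by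
    have hlt := degree_modByMonic_lt (T0 p t1 t2) hmon
    have hP0 : (P0 p).degree = (p : ℕ) := by
      rw [P0]
      exact degree_X_pow_sub_C (pPos p) _
    rw [hP0, ← hrem] at hlt
    exact (natDegree_lt_iff_degree_lt hz).mpr hlt
  have hPsirem : Psi p rem = 0 := by
    have : rem = T0 p t1 t2 - P0 p * (T0 p t1 t2 /ₘ P0 p) := by
      linear_combination hdiv
    rw [this, map_sub, map_mul, Psi_T0 p t1 t2 h1 h2 h12, Psi_P0, zero_mul, sub_zero]
  have hPsisum : ∑ i ∈ range p, psi p (rem.coeff i) * (mu p) ^ i = 0 := by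
    have := eval₂_eq_sum_range' (psi p) hdeg (mu p)
    rw [← this]
    exact hPsirem
  have hcoeff := indep p p le_rfl (fun i => psi p (rem.coeff i))
    (fun j => deriv_psi p _) hPsisum
  exfalso
  apply hz
  ext i
  rcases Nat.lt_or_ge i p with h | h
  · have := hcoeff i h
    have hinj : Function.Injective (expand (ZMod p) p) := expand_injective (pPos p)
    have : rem.coeff i = 0 := by
      apply hinj
      rw [map_zero]
      exact this
    simp [this]
  · rw [coeff_eq_zero_of_natDegree_lt (lt_of_lt_of_le hdeg h)]
    simp

lemma fact_lemma : ∀ k, k < p →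
    ((p - 1 - k).factorial : ZMod p) * (k.factorial : ZMod p) * (-1) ^ k = -1 := by
  intro k
  induction k with
  | zero =>
    intro _
    simpa using ZMod.wilsons_lemma p
  | succ n ih =>
    intro hn
    have hih := ih (by omega)
    have hfac : (p - 1 - n).factorial = (p - 1 - n) * (p - 1 - (n + 1)).factorial := by
      have h : p - 1 - n = (p - 1 - (n + 1)) + 1 := by omega
      rw [h, Nat.factorial_succ]
    have hcast : ((p - 1 - n : ℕ) : ZMod p) = -(((n + 1 : ℕ)) : ZMod p) := by
      have hs : (p - 1 - n) + (n + 1) = p := by omega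
      have h0 : ((p - 1 - n : ℕ) : ZMod p) + ((n + 1 : ℕ) : ZMod p) = 0 := by
        rw [← Nat.cast_add, hs, ZMod.natCast_self]
      linear_combination h0
    rw [hfac, Nat.cast_mul, hcast] at hih
    rw [Nat.factorial_succ, Nat.cast_mul, pow_succ]
    push_cast at hih ⊢
    linear_combination hih

lemma fact_ne_zero (m : ℕ) (hm : m < p) : ((m.factorial : ℕ) : ZMod p) ≠ 0 := by
  rw [Ne, ZMod.natCast_eq_zero_iff]
  intro hdvd
  have := (Nat.Prime.dvd_factorial (Fact.out : p.Prime)).mp hdvd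
  omega

lemma descPoch_eval {K : Type*} [Field K] (x : K) (m : ℕ) :
    Polynomial.eval x (descPochhammer K m) = ∏ j ∈ range m, (x - (j : K)) := by
  induction m with
  | zero => simp [descPochhammer_zero]
  | succ n ih =>
    rw [descPochhammer_succ_right, eval_mul, ih, prod_range_succ, eval_sub, eval_X, eval_natCast]

lemma binomF_eq (n : ℕ) (m : ℕ) :
    binomF ((n : RatFunc (ZMod p)) * RatFunc.X - 1) m
      = algebraMap ((ZMod p)[X]) (RatFunc (ZMod p)) (Da p ((n : ℕ) : ZMod p) m)
        / (m.factorial : RatFunc (ZMod p)) := by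
  rw [binomF, descPoch_eval]
  congr 1
  rw [Da, map_prod]
  apply Finset.prod_congr rfl
  intro j _
  rw [map_sub, map_mul]
  have h1 : algebraMap ((ZMod p)[X]) (RatFunc (ZMod p)) (C ((n : ℕ) : ZMod p))
      = (n : RatFunc (ZMod p)) := by
    rw [C_eq_natCast, map_natCast]
  have h2 : algebraMap ((ZMod p)[X]) (RatFunc (ZMod p)) (C ((j + 1 : ℕ) : ZMod p))
      = ((j + 1 : ℕ) : RatFunc (ZMod p)) := by
    rw [C_eq_natCast, map_natCast]
  rw [h1, h2, RatFunc.algebraMap_X]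
  push_cast
  ring

lemma fact_lemma_K (k : ℕ) (hk : k < p) :
    (((p - 1 - k).factorial : ℕ) : RatFunc (ZMod p)) * ((k.factorial : ℕ) : RatFunc (ZMod p))
      * (-1) ^ k = -1 := by
  have h := congrArg (algebraMap (ZMod p) (RatFunc (ZMod p))) (fact_lemma p k hk)
  rw [map_mul, map_mul, map_pow, map_neg, map_one, map_natCast, map_natCast] at h
  exact h

lemma factK_ne_zero (m : ℕ) (hm : m < p) : ((m.factorial : ℕ) : RatFunc (ZMod p)) ≠ 0 := by
  have h := fact_ne_zero p m hm
  rw [Ne, ← map_natCast (algebraMap (ZMod p) (RatFunc (ZMod p)))]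
  intro h0
  exact h ((map_eq_zero_iff _ (RingHom.injective _)).mp h0)

lemma coeff_identity (k : ℕ) (hk : k < p) (A B : RatFunc (ZMod p)) :
    A / (((p - 1 - k).factorial : ℕ) : RatFunc (ZMod p)) * (-1) ^ k
      / ((k.factorial : ℕ) : RatFunc (ZMod p)) * B = -(A * B) := by
  have h1 := fact_lemma_K p k hk
  have d1 : (((p - 1 - k).factorial : ℕ) : RatFunc (ZMod p)) ≠ 0 :=
    factK_ne_zero p _ (by omega)
  have d2 : ((k.factorial : ℕ) : RatFunc (ZMod p)) ≠ 0 := factK_ne_zero p _ (by omega)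
  have hsq : ((-1 : RatFunc (ZMod p)) ^ k) * ((-1 : RatFunc (ZMod p)) ^ k) = 1 := by
    rw [← pow_add, ← two_mul, pow_mul]
    norm_num
  have key : (-1 : RatFunc (ZMod p)) ^ k
      = -((((p - 1 - k).factorial : ℕ) : RatFunc (ZMod p))
          * ((k.factorial : ℕ) : RatFunc (ZMod p))) := by
    linear_combination ((-1 : RatFunc (ZMod p)) ^ k) * h1
      - ((((p - 1 - k).factorial : ℕ) : RatFunc (ZMod p))
          * ((k.factorial : ℕ) : RatFunc (ZMod p))) * hsq
  rw [key]
  field_simp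

lemma map_Fh (n : ℕ) :
    (Lag p ((n : RatFunc (ZMod p)) * RatFunc.X)).comp
        (Polynomial.C (n : RatFunc (ZMod p)) * Polynomial.X)
      = (Fh p ((n : ℕ) : ZMod p)).map (algebraMap ((ZMod p)[X]) (RatFunc (ZMod p))) := by
  have hL : (Lag p ((n : RatFunc (ZMod p)) * RatFunc.X)).comp
        (Polynomial.C (n : RatFunc (ZMod p)) * Polynomial.X)
      = ∑ k ∈ range p, C (binomF ((n : RatFunc (ZMod p)) * RatFunc.X - 1) (p - 1 - k)
          * (-1) ^ k / (k.factorial : RatFunc (ZMod p)) * (n : RatFunc (ZMod p)) ^ k) * X ^ k := by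
    rw [Lag, Polynomial.comp, eval₂_finset_sum]
    apply Finset.sum_congr rfl
    intro k _
    rw [eval₂_mul, eval₂_C, eval₂_X_pow, mul_pow, ← C_pow, ← mul_assoc, ← C_mul]
  have hR : (Fh p ((n : ℕ) : ZMod p)).map (algebraMap ((ZMod p)[X]) (RatFunc (ZMod p)))
      = ∑ k ∈ range p, C (-(algebraMap ((ZMod p)[X]) (RatFunc (ZMod p))
            (Da p ((n : ℕ) : ZMod p) (p - 1 - k)) * (n : RatFunc (ZMod p)) ^ k)) * X ^ k := by
    rw [Fh, Polynomial.map_neg, Polynomial.map_sum, ← Finset.sum_neg_distrib]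
    apply Finset.sum_congr rfl
    intro k _
    rw [Polynomial.map_mul, Polynomial.map_C, Polynomial.map_pow, Polynomial.map_X, map_mul,
      map_pow]
    have h1 : algebraMap ((ZMod p)[X]) (RatFunc (ZMod p)) (C ((n : ℕ) : ZMod p))
        = (n : RatFunc (ZMod p)) := by
      rw [C_eq_natCast, map_natCast]
    rw [h1, map_neg]
    ring
  rw [hL, hR]
  apply Finset.sum_congr rfl
  intro k hk
  congr 1
  congr 1
  rw [binomF_eq]
  exact coeff_identity p k (mem_range.mp hk) _ _

lemma algC (x : ZMod p) : algebraMap ((ZMod p)[X]) (RatFunc (ZMod p)) (C x)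
    = algebraMap (ZMod p) (RatFunc (ZMod p)) x := by
  rw [IsScalarTower.algebraMap_apply (ZMod p) ((ZMod p)[X]) (RatFunc (ZMod p)) x]
  congr 1

lemma map_bF (r s : ℕ) :
    bF p r s (RatFunc.X : RatFunc (ZMod p))
      = algebraMap ((ZMod p)[X]) (RatFunc (ZMod p))
          (b0 p ((r : ℕ) : ZMod p) ((s : ℕ) : ZMod p)) := by
  rw [bF, b0, map_neg, map_sum, ← Finset.sum_neg_distrib]
  apply Finset.sum_congr rfl
  intro k hk
  have hk' : k < p := mem_range.mp hk
  rw [map_mul, map_mul, map_pow]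
  have hC : algebraMap ((ZMod p)[X]) (RatFunc (ZMod p))
        (C (((r : ℕ) : ZMod p) * ((s : ℕ) : ZMod p)⁻¹))
      = (r : RatFunc (ZMod p)) / (s : RatFunc (ZMod p)) := by
    rw [algC, map_mul, map_inv₀, map_natCast, map_natCast, div_eq_mul_inv]
  rw [hC, binomF_eq, binomF_eq]
  have hneg : (-(r : RatFunc (ZMod p)) / (s : RatFunc (ZMod p))) ^ k
      = (-1) ^ k * ((r : RatFunc (ZMod p)) / (s : RatFunc (ZMod p))) ^ k := by
    rw [neg_div, neg_pow]
  rw [hneg]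
  have hci := coeff_identity p k hk'
    (algebraMap ((ZMod p)[X]) (RatFunc (ZMod p)) (Da p ((r : ℕ) : ZMod p) (p - 1 - k)))
    (algebraMap ((ZMod p)[X]) (RatFunc (ZMod p)) (Da p ((s : ℕ) : ZMod p) k))
  linear_combination (((r : RatFunc (ZMod p)) / (s : RatFunc (ZMod p))) ^ k) * hci

end S7

theorem stmt7 (p r s : ℕ) [Fact p.Prime] (hodd : Odd p)
    (hr0 : 0 < r) (hrp : r < p) (hs0 : 0 < s) (hsp : s < p) (hrs : r + s ≠ p) :
    (Polynomial.X ^ p -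
        Polynomial.C ((RatFunc.X : RatFunc (ZMod p)) ^ p - RatFunc.X)) ∣
      ((Lag p ((r : RatFunc (ZMod p)) * RatFunc.X)).comp
            (Polynomial.C (r : RatFunc (ZMod p)) * Polynomial.X) *
          (Lag p ((s : RatFunc (ZMod p)) * RatFunc.X)).comp
            (Polynomial.C (s : RatFunc (ZMod p)) * Polynomial.X) -
        Polynomial.C (bF p r s (RatFunc.X : RatFunc (ZMod p))) *
          (Lag p (((r + s : ℕ) : RatFunc (ZMod p)) * RatFunc.X)).comp
            (Polynomial.C ((r + s : ℕ) : RatFunc (ZMod p)) * Polynomial.X)) := by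
  classical
  have hrb : ((r : ℕ) : ZMod p) ≠ 0 := S7.natCast_ne_zero_of_lt p (by omega) hrp
  have hsb : ((s : ℕ) : ZMod p) ≠ 0 := S7.natCast_ne_zero_of_lt p (by omega) hsp
  have hrsb : ((r : ℕ) : ZMod p) + ((s : ℕ) : ZMod p) ≠ 0 := by
    have hcastadd : ((r : ℕ) : ZMod p) + ((s : ℕ) : ZMod p) = (((r + s : ℕ)) : ZMod p) := by
      push_cast
      ring
    rw [hcastadd]
    rcases Nat.lt_or_ge (r + s) p with h | h
    · exact S7.natCast_ne_zero_of_lt p (by omega) h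
    · intro h0
      obtain ⟨c, hc⟩ := (ZMod.natCast_eq_zero_iff _ _).mp h0
      have hc0 : c ≠ 0 := by
        rintro rfl
        omega
      have hc2 : c < 2 := by
        by_contra hh
        push_neg at hh
        have : 2 * p ≤ p * c := by nlinarith
        omega
      have : c = 1 := by omega
      rw [this, mul_one] at hc
      exact hrs hc
  have hdvd := S7.dvd_T0 p _ _ hrb hsb hrsb
  have hmap := map_dvd (Polynomial.mapRingHom (algebraMap (Polynomial (ZMod p)) (RatFunc (ZMod p)))) hdvd
  simp only [Polynomial.coe_mapRingHom] at hmap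
  have hP : (S7.P0 p).map (algebraMap (Polynomial (ZMod p)) (RatFunc (ZMod p)))
      = Polynomial.X ^ p - Polynomial.C ((RatFunc.X : RatFunc (ZMod p)) ^ p - RatFunc.X) := by
    rw [S7.P0, Polynomial.map_sub, Polynomial.map_pow, Polynomial.map_X, Polynomial.map_C,
      map_sub, map_pow, RatFunc.algebraMap_X]
  have hT : (S7.T0 p ((r : ℕ) : ZMod p) ((s : ℕ) : ZMod p)).map
        (algebraMap (Polynomial (ZMod p)) (RatFunc (ZMod p)))
      = ((Lag p ((r : RatFunc (ZMod p)) * RatFunc.X)).comp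
            (Polynomial.C (r : RatFunc (ZMod p)) * Polynomial.X) *
          (Lag p ((s : RatFunc (ZMod p)) * RatFunc.X)).comp
            (Polynomial.C (s : RatFunc (ZMod p)) * Polynomial.X) -
        Polynomial.C (bF p r s (RatFunc.X : RatFunc (ZMod p))) *
          (Lag p (((r + s : ℕ) : RatFunc (ZMod p)) * RatFunc.X)).comp
            (Polynomial.C ((r + s : ℕ) : RatFunc (ZMod p)) * Polynomial.X)) := by
    rw [S7.T0, Polynomial.map_sub, Polynomial.map_mul, Polynomial.map_mul, Polynomial.map_C]
    rw [← S7.map_Fh p r, ← S7.map_Fh p s]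
    have hcastadd : ((r : ℕ) : ZMod p) + ((s : ℕ) : ZMod p) = (((r + s : ℕ)) : ZMod p) := by
      push_cast
      ring
    rw [hcastadd, ← S7.map_Fh p (r + s), ← S7.map_bF p r s]
  rw [hP, hT] at hmap
  exact hmap
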